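/- Let D(Ā) = (X, E) be the state digraph of a structural pattern Ā and let M* be a maximum matching of the bipartite graph B(X, X, E) with m right-unmatched vertices. Then the spanning decomposition of D(Ā) induced by M* into vertex-disjoint state stems and cycles is minimal: every spanning subgraph of D(Ā) that is a vertex-disjoint union of state stems and cycles covering all vertices contains at least m state stems. -/

import Mathlib

/-- A real matrix `A` realizes the Boolean structural pattern `P` if `A` vanishes
wherever `P` is zero (`false`). -/
def Realizes {m k : ℕ} (A : Matrix (Fin m) (Fin k) ℝ) (P : Matrix (Fin m) (Fin k) Bool) : Prop :=
  ∀ i j, P i j = false → A i j = 0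

/-- The controllability matrix `[B, AB, …, A^{n-1}B]`. -/
def ctrbMatrix {n p : ℕ} (A : Matrix (Fin n) (Fin n) ℝ) (B : Matrix (Fin n) (Fin p) ℝ) :
    Matrix (Fin n) (Fin n × Fin p) ℝ :=
  Matrix.of fun i jk => (A ^ (jk.1 : ℕ) * B) i jk.2

/-- Structural controllability of a pair of patterns `(Ā, B̄)`: some realization
has full-rank controllability matrix. -/
def StructurallyControllable {n p : ℕ} (Ab : Matrix (Fin n) (Fin n) Bool)
    (Bb : Matrix (Fin n) (Fin p) Bool) : Prop :=
  ∃ (A : Matrix (Fin n) (Fin n) ℝ) (B : Matrix (Fin n) (Fin p) ℝ),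
    Realizes A Ab ∧ Realizes B Bb ∧ (ctrbMatrix A B).rank = n

/-- A dedicated input pattern: every column has exactly one nonzero entry. -/
def Dedicated {n p : ℕ} (Bb : Matrix (Fin n) (Fin p) Bool) : Prop :=
  ∀ j, ∃! i, Bb i j = true

/-- Edge `x_j → x_i` of the state digraph `D(Ā)` (present iff `Ā_{ij} ≠ 0`). -/
def stateEdge {n : ℕ} (Ab : Matrix (Fin n) (Fin n) Bool) (j i : Fin n) : Prop :=
  Ab i j = true

/-- Edge set of the bipartite graph `B(X, X, E)` associated with `D(Ā)`:
`(j, i)` is an edge from left `x_j` to right `x_i` iff `x_j → x_i` in `D(Ā)`. -/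
def stateEdgeFinset {n : ℕ} (Ab : Matrix (Fin n) (Fin n) Bool) : Finset (Fin n × Fin n) :=
  Finset.univ.filter fun e => Ab e.2 e.1 = true

/-- A matching of a bipartite graph with edge set `E`: a subset of `E` in which
no two edges share a left endpoint or share a right endpoint. -/
def IsMatching {α β : Type*} (E M : Finset (α × β)) : Prop :=
  M ⊆ E ∧ (∀ e ∈ M, ∀ f ∈ M, e.1 = f.1 → e = f) ∧ ∀ e ∈ M, ∀ f ∈ M, e.2 = f.2 → e = f

/-- A maximum matching: a matching of maximum cardinality. -/
def IsMaxMatching {α β : Type*} (E M : Finset (α × β)) : Prop :=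
  IsMatching E M ∧ ∀ M', IsMatching E M' → M'.card ≤ M.card

/-- `v` is a right-unmatched vertex with respect to the matching `M`. -/
def RightUnmatched {α β : Type*} (M : Finset (α × β)) (v : β) : Prop :=
  ∀ e ∈ M, e.2 ≠ v

/-- The set of right-unmatched vertices of `M`. -/
def unmatchedSet {α β : Type*} (M : Finset (α × β)) : Set β :=
  {v | RightUnmatched M v}

/-- The tip (last vertex) of the path `r :: l`. -/
def stemTip {V : Type*} (r : V) (l : List V) : V :=
  (r :: l).getLast (List.cons_ne_nil r l)

/-- `r :: l` is a state stem: a simple directed path (possibly a single vertex)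
with root `r` and tip `stemTip r l`. -/
def IsStem {V : Type*} (edge : V → V → Prop) (r : V) (l : List V) : Prop :=
  (r :: l).Nodup ∧ List.Chain edge r l

/-- `r :: l` is a simple directed cycle (a self-loop when `l = []`). -/
def IsCycle {V : Type*} (edge : V → V → Prop) (r : V) (l : List V) : Prop :=
  IsStem edge r l ∧ edge (stemTip r l) r

/-- The (directed) edges of the stem `r :: l`. -/
def stemEdges {V : Type*} (r : V) (l : List V) : List (V × V) :=
  (r :: l).zip l

/-- The (directed) edges of the cycle `r :: l`, including the closing edge. -/
def cycleEdges {V : Type*} (r : V) (l : List V) : List (V × V) :=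
  (r :: l).zip (l ++ [r])

/-- The vertices of a stem/cycle encoded as a pair (root, remaining vertices). -/
def pieceVerts {V : Type*} (s : V × List V) : List V :=
  s.1 :: s.2

/-- Reachability (by a directed path) in a digraph. -/
def Reach {V : Type*} (edge : V → V → Prop) : V → V → Prop :=
  Relation.ReflTransGen edge

/-- `S` is a strongly connected component: a nonempty set of mutually reachable
vertices that is maximal with this property. -/
def IsSCC {V : Type*} (edge : V → V → Prop) (S : Set V) : Prop :=
  S.Nonempty ∧ (∀ v ∈ S, ∀ w ∈ S, Reach edge v w) ∧
    ∀ v ∈ S, ∀ w, Reach edge v w → Reach edge w v → w ∈ S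

/-- A non-top-linked SCC: an SCC with no edge entering it from outside. -/
def IsNonTopLinkedSCC {V : Type*} (edge : V → V → Prop) (S : Set V) : Prop :=
  IsSCC edge S ∧ ∀ a b, edge a b → b ∈ S → a ∈ S

/-- `β`: the number of non-top-linked SCCs of `D(Ā)`. -/
noncomputable def numNonTopSCC {n : ℕ} (Ab : Matrix (Fin n) (Fin n) Bool) : ℕ :=
  Set.ncard {S : Set (Fin n) | IsNonTopLinkedSCC (stateEdge Ab) S}

/-- The number of non-top-linked SCCs of `D(Ā)` that are top assignable w.r.t. `M`,
i.e. contain a right-unmatched vertex of `M`. -/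
noncomputable def assignIdx {n : ℕ} (Ab : Matrix (Fin n) (Fin n) Bool) (M : Finset (Fin n × Fin n)) : ℕ :=
  Set.ncard {S : Set (Fin n) | IsNonTopLinkedSCC (stateEdge Ab) S ∧ ∃ v ∈ S, RightUnmatched M v}

/-- `α`: the maximum assignability index, the maximum over all maximum matchings of
the number of top assignable non-top-linked SCCs. -/
noncomputable def maxAssignIdx {n : ℕ} (Ab : Matrix (Fin n) (Fin n) Bool) : ℕ :=
  sSup {k | ∃ M, IsMaxMatching (stateEdgeFinset Ab) M ∧ assignIdx Ab M = k}

/-- The minimum number of dedicated inputs rendering the pattern structurally controllable. -/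
noncomputable def minDedicatedInputs {n : ℕ} (Ab : Matrix (Fin n) (Fin n) Bool) : ℕ :=
  sInf {p : ℕ | ∃ Bb : Matrix (Fin n) (Fin p) Bool, Dedicated Bb ∧ StructurallyControllable Ab Bb}

section AuxDecomp

lemma aux_mem_zip {α β} {l1 : List α} {l2 : List β} {e} (h : e ∈ l1.zip l2) :
    ∃ i, ∃ h1 : i < l1.length, ∃ h2 : i < l2.length, e = (l1[i], l2[i]) := by
  obtain ⟨i, hi, he⟩ := List.mem_iff_getElem.mp h
  rw [List.length_zip, lt_min_iff] at hi
  exact ⟨i, hi.1, hi.2, by rw [← he, List.getElem_zip]⟩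

lemma aux_chain_getElem {α} {R : α → α → Prop} {r : α} {l : List α} (h : List.Chain R r l)
    (i : ℕ) (hi : i < l.length) : R ((r::l)[i]'(by simp; omega)) l[i] := by
  induction l generalizing r i with
  | nil => simp at hi
  | cons a t ih =>
    obtain ⟨hra, hat⟩ := List.isChain_cons_cons.mp h
    cases i with
    | zero => simpa using hra
    | succ j => exact ih hat j (by simpa using hi)

section pieces
variable {V : Type*} {edge : V → V → Prop} {r : V} {l : List V}

lemma stem_mem {e} (he : e ∈ stemEdges r l) :
    ∃ i, ∃ h1 : i < l.length, e = ((r::l)[i]'(by simp; omega), l[i]) := by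
  obtain ⟨i, h1, h2, he⟩ := aux_mem_zip he
  exact ⟨i, h2, he⟩

lemma cycle_mem {e} (he : e ∈ cycleEdges r l) :
    ∃ i, ∃ h1 : i < l.length + 1, e = ((r::l)[i]'(by simpa using h1), (l ++ [r])[i]'(by simpa using h1)) := by
  obtain ⟨i, h1, h2, he⟩ := aux_mem_zip he
  exact ⟨i, by simpa using h1, he⟩

lemma stem_edge (h : IsStem edge r l) {e} (he : e ∈ stemEdges r l) :
    edge e.1 e.2 ∧ e.1 ∈ pieceVerts (r, l) ∧ e.2 ∈ pieceVerts (r, l) := by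
  obtain ⟨i, h1, rfl⟩ := stem_mem he
  refine ⟨aux_chain_getElem h.2 i h1, List.getElem_mem _, List.mem_cons_of_mem _ (List.getElem_mem _)⟩

lemma cycle_tip : (r::l)[l.length]'(by simp) = stemTip r l := by
  have := List.getLast_eq_getElem (l := r::l) (List.cons_ne_nil r l)
  simp only [List.length_cons, Nat.add_sub_cancel] at this
  rw [stemTip, this]

lemma cycle_edge (h : IsCycle edge r l) {e} (he : e ∈ cycleEdges r l) :
    edge e.1 e.2 ∧ e.1 ∈ pieceVerts (r, l) ∧ e.2 ∈ pieceVerts (r, l) := by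
  obtain ⟨i, h1, rfl⟩ := cycle_mem he
  refine ⟨?_, List.getElem_mem _, ?_⟩
  · rcases Nat.lt_or_ge i l.length with hlt | hge
    · have : (l ++ [r])[i]'(by simp; omega) = l[i] := List.getElem_append_left hlt
      rw [this]
      exact aux_chain_getElem h.1.2 i hlt
    · have hi : i = l.length := by omega
      subst hi
      have h2 : (l ++ [r])[l.length]'(by simp) = r := by simp
      rw [h2, cycle_tip]
      exact h.2
  · have : (l ++ [r])[i]'(by simpa using h1) ∈ l ++ [r] := List.getElem_mem _
    simp only [List.mem_append, List.mem_singleton] at this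
    rcases this with h' | h'
    · exact List.mem_cons_of_mem _ h'
    · simp [pieceVerts, h']

lemma stem_inj (h : (r::l).Nodup) {e f} (he : e ∈ stemEdges r l) (hf : f ∈ stemEdges r l) :
    (e.1 = f.1 → e = f) ∧ (e.2 = f.2 → e = f) := by
  obtain ⟨i, hi, rfl⟩ := stem_mem he
  obtain ⟨j, hj, rfl⟩ := stem_mem hf
  have hl := h.of_cons
  constructor
  · intro h1
    obtain rfl : i = j := (h.getElem_inj_iff (hi := by simp; omega) (hj := by simp; omega)).mp h1
    rfl
  · intro h2
    obtain rfl : i = j := (hl.getElem_inj_iff (hi := hi) (hj := hj)).mp h2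
    rfl

lemma cycle_inj (h : (r::l).Nodup) {e f} (he : e ∈ cycleEdges r l) (hf : f ∈ cycleEdges r l) :
    (e.1 = f.1 → e = f) ∧ (e.2 = f.2 → e = f) := by
  obtain ⟨i, hi, rfl⟩ := cycle_mem he
  obtain ⟨j, hj, rfl⟩ := cycle_mem hf
  have hl : (l ++ [r]).Nodup := ((List.perm_append_singleton r l).nodup_iff).mpr h
  constructor
  · intro h1
    obtain rfl : i = j := (h.getElem_inj_iff (hi := by simpa using hi) (hj := by simpa using hj)).mp h1
    rfl
  · intro h2
    obtain rfl : i = j := (hl.getElem_inj_iff (hi := by simpa using hi) (hj := by simpa using hj)).mp h2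
    rfl

lemma stem_edges_nodup (h : (r::l).Nodup) : (stemEdges r l).Nodup := by
  have : (stemEdges r l).map Prod.snd = l := List.map_snd_zip (by simp)
  have h2 := h.of_cons
  rw [← this] at h2
  exact List.Nodup.of_map Prod.snd h2

lemma cycle_edges_nodup (h : (r::l).Nodup) : (cycleEdges r l).Nodup := by
  have hperm : (l ++ [r]).Nodup := ((List.perm_append_singleton r l).nodup_iff).mpr h
  have : (cycleEdges r l).map Prod.snd = l ++ [r] := List.map_snd_zip (by simp)
  rw [← this] at hperm
  exact List.Nodup.of_map Prod.snd hperm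

lemma stem_edges_length : (stemEdges r l).length = l.length := by
  simp [stemEdges]

lemma cycle_edges_length : (cycleEdges r l).length = l.length + 1 := by
  simp [cycleEdges]

end pieces

end AuxDecomp

/-- The decomposition induced by a maximum matching is minimal: every
spanning decomposition of `D(Ā)` into vertex-disjoint state stems and cycles contains at
least as many state stems as there are right-unmatched vertices of a maximum matching. -/
theorem maximum_matching_decomposition_minimal
    {n : ℕ} (Ab : Matrix (Fin n) (Fin n) Bool) (M : Finset (Fin n × Fin n))
    (hM : IsMaxMatching (stateEdgeFinset Ab) M)
    (Stems Cycles : Finset (Fin n × List (Fin n)))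
    (hstems : ∀ s ∈ Stems, IsStem (stateEdge Ab) s.1 s.2)
    (hcycles : ∀ c ∈ Cycles, IsCycle (stateEdge Ab) c.1 c.2)
    (hdisjSC : Disjoint Stems Cycles)
    (hdisj : ∀ s ∈ Stems ∪ Cycles, ∀ t ∈ Stems ∪ Cycles, s ≠ t →
      ∀ v, v ∈ pieceVerts s → v ∉ pieceVerts t)
    (hspan : ∀ v : Fin n, ∃ s ∈ Stems ∪ Cycles, v ∈ pieceVerts s) :
    Set.ncard (unmatchedSet M) ≤ Stems.card := by
  classical
  have hnodup : ∀ s ∈ Stems ∪ Cycles, (pieceVerts s).Nodup := by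
    intro s hs
    rcases Finset.mem_union.mp hs with h | h
    · exact (hstems s h).1
    · exact (hcycles s h).1.1
  set f : Fin n × List (Fin n) → Finset (Fin n × Fin n) :=
    fun s => if s ∈ Stems then (stemEdges s.1 s.2).toFinset else (cycleEdges s.1 s.2).toFinset
    with hf
  have hfprop : ∀ s ∈ Stems ∪ Cycles, ∀ e ∈ f s,
      stateEdge Ab e.1 e.2 ∧ e.1 ∈ pieceVerts s ∧ e.2 ∈ pieceVerts s := by
    intro s hs e he
    by_cases h : s ∈ Stems
    · simp only [hf, if_pos h, List.mem_toFinset] at he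
      exact stem_edge (hstems s h) he
    · have hc : s ∈ Cycles := (Finset.mem_union.mp hs).resolve_left h
      simp only [hf, if_neg h, List.mem_toFinset] at he
      exact cycle_edge (hcycles s hc) he
  have hfinj : ∀ s ∈ Stems ∪ Cycles, ∀ e ∈ f s, ∀ e' ∈ f s,
      (e.1 = e'.1 → e = e') ∧ (e.2 = e'.2 → e = e') := by
    intro s hs e he e' he'
    by_cases h : s ∈ Stems
    · simp only [hf, if_pos h, List.mem_toFinset] at he he'
      exact stem_inj (hnodup s hs) he he'
    · simp only [hf, if_neg h, List.mem_toFinset] at he he'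
      exact cycle_inj (hnodup s hs) he he'
  set M' : Finset (Fin n × Fin n) := (Stems ∪ Cycles).biUnion f with hM'
  have hM'mem : ∀ e, e ∈ M' ↔ ∃ s ∈ Stems ∪ Cycles, e ∈ f s := by
    intro e; simp [hM']
  -- M' is a matching
  have hmatch : IsMatching (stateEdgeFinset Ab) M' := by
    refine ⟨?_, ?_, ?_⟩
    · intro e he
      obtain ⟨s, hs, hes⟩ := (hM'mem e).mp he
      have := (hfprop s hs e hes).1
      simpa [stateEdgeFinset, stateEdge] using this
    · intro e he e' he' h1
      obtain ⟨s, hs, hes⟩ := (hM'mem e).mp he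
      obtain ⟨t, ht, het⟩ := (hM'mem e').mp he'
      by_cases hst : s = t
      · subst hst; exact (hfinj s hs e hes e' het).1 h1
      · exfalso
        have h2 := (hfprop s hs e hes).2.1
        have h3 := (hfprop t ht e' het).2.1
        exact hdisj s hs t ht hst e.1 h2 (h1 ▸ h3)
    · intro e he e' he' h1
      obtain ⟨s, hs, hes⟩ := (hM'mem e).mp he
      obtain ⟨t, ht, het⟩ := (hM'mem e').mp he'
      by_cases hst : s = t
      · subst hst; exact (hfinj s hs e hes e' het).2 h1
      · exfalso
        have h2 := (hfprop s hs e hes).2.2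
        have h3 := (hfprop t ht e' het).2.2
        exact hdisj s hs t ht hst e.2 h2 (h1 ▸ h3)
  -- cardinality of M'
  have hpd : ∀ s ∈ Stems ∪ Cycles, ∀ t ∈ Stems ∪ Cycles, s ≠ t → Disjoint (f s) (f t) := by
    intro s hs t ht hst
    rw [Finset.disjoint_left]
    intro e hes het
    exact hdisj s hs t ht hst e.2 (hfprop s hs e hes).2.2 (hfprop t ht e het).2.2
  have hcardM' : M'.card = ∑ s ∈ Stems ∪ Cycles, (f s).card := Finset.card_biUnion hpd
  have hfcardS : ∀ s ∈ Stems, (f s).card = s.2.length := by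
    intro s hs
    have hn : (stemEdges s.1 s.2).Nodup := stem_edges_nodup (hstems s hs).1
    simp [hf, if_pos hs, List.toFinset_card_of_nodup hn, stem_edges_length]
  have hfcardC : ∀ s ∈ Cycles, (f s).card = s.2.length + 1 := by
    intro s hs
    have hns : s ∉ Stems := fun h => (Finset.disjoint_left.mp hdisjSC h) hs
    have hn : (cycleEdges s.1 s.2).Nodup := cycle_edges_nodup (hcycles s hs).1.1
    simp [hf, if_neg hns, List.toFinset_card_of_nodup hn, cycle_edges_length]
  -- vertex count
  have hpdv : ∀ s ∈ Stems ∪ Cycles, ∀ t ∈ Stems ∪ Cycles, s ≠ t →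
      Disjoint (pieceVerts s).toFinset (pieceVerts t).toFinset := by
    intro s hs t ht hst
    rw [Finset.disjoint_left]
    intro v hv hv'
    exact hdisj s hs t ht hst v (List.mem_toFinset.mp hv) (List.mem_toFinset.mp hv')
  have huniv : (Finset.univ : Finset (Fin n)) =
      (Stems ∪ Cycles).biUnion (fun s => (pieceVerts s).toFinset) := by
    ext v
    simp only [Finset.mem_univ, Finset.mem_biUnion, List.mem_toFinset, true_iff]
    exact hspan v
  have hvcount : n = ∑ s ∈ Stems ∪ Cycles, (s.2.length + 1) := by
    have h1 : (Finset.univ : Finset (Fin n)).card =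
        ∑ s ∈ Stems ∪ Cycles, (pieceVerts s).toFinset.card := by
      rw [huniv]; exact Finset.card_biUnion hpdv
    have h2 : ∀ s ∈ Stems ∪ Cycles, (pieceVerts s).toFinset.card = s.2.length + 1 := by
      intro s hs
      rw [List.toFinset_card_of_nodup (hnodup s hs)]
      simp [pieceVerts]
    rw [Finset.card_univ, Fintype.card_fin] at h1
    exact h1.trans (Finset.sum_congr rfl h2)
  -- M'.card + Stems.card = n
  have hkey : M'.card + Stems.card = ∑ s ∈ Stems ∪ Cycles, (s.2.length + 1) := by
    rw [hcardM']
    rw [Finset.sum_union hdisjSC, Finset.sum_union hdisjSC]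
    rw [Finset.sum_congr rfl hfcardS, Finset.sum_congr rfl hfcardC]
    simp only [Finset.sum_add_distrib, Finset.sum_const, smul_eq_mul, mul_one]
    omega
  have hle : M'.card ≤ M.card := hM.2 M' hmatch
  -- unmatched set cardinality
  have himg : (M.image Prod.snd).card = M.card := by
    apply Finset.card_image_of_injOn
    intro e he e' he' h
    exact hM.1.2.2 e he e' he' h
  have hunm : unmatchedSet M = ↑(Finset.univ \ M.image Prod.snd) := by
    ext v
    simp only [unmatchedSet, RightUnmatched, Set.mem_setOf_eq, Finset.coe_sdiff,
      Finset.coe_univ, Set.mem_diff, Set.mem_univ, true_and, Finset.mem_coe,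
      Finset.mem_image, not_exists]
    constructor
    · rintro h e ⟨he, rfl⟩
      exact h e he rfl
    · intro h e he hev
      exact h e ⟨he, hev⟩
  have hcardunm : Set.ncard (unmatchedSet M) = n - M.card := by
    rw [hunm, Set.ncard_coe_finset, Finset.card_sdiff_of_subset (Finset.subset_univ _),
      Finset.card_univ, Fintype.card_fin, himg]
  omega
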